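/- For the path Pₙ on n vertices with n ≥ 7, the d₂-transitivity is exactly 5, i.e., Tr_{d₂}(Pₙ) = 5. -/

import Mathlib

open SimpleGraph

/-- `P : Fin k → Set V` is a d₂-transitive partition of size `k` of the graph `G`:
its parts are nonempty, every vertex lies in exactly one part, and for `i < j`
every vertex of `P j` is within graph distance 2 of some vertex of `P i`. -/
def IsD2TransPartition {V : Type*} (G : SimpleGraph V) {k : ℕ} (P : Fin k → Set V) : Prop :=
  (∀ i, (P i).Nonempty) ∧ (∀ v : V, ∃! i, v ∈ P i) ∧
  ∀ i j : Fin k, i < j → ∀ b ∈ P j, ∃ a ∈ P i, G.edist a b ≤ 2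

/-- The d₂-transitivity `Tr_{d₂}(G)`: the maximum size of a d₂-transitive partition. -/
noncomputable def Trd2 {V : Type*} (G : SimpleGraph V) : ℕ :=
  sSup {k : ℕ | ∃ P : Fin k → Set V, IsD2TransPartition G P}

-- walks in the path graph move by at most 1 per step
lemma walk_val_bound {n : ℕ} {a b : Fin n} (w : (pathGraph n).Walk a b) :
    a.val ≤ b.val + w.length ∧ b.val ≤ a.val + w.length := by
  induction w with
  | nil => simp
  | cons h w ih =>
    rw [pathGraph_adj] at h
    simp only [SimpleGraph.Walk.length_cons]
    omega

lemma edist_two_val {n : ℕ} {a b : Fin n} (h : (pathGraph n).edist a b ≤ 2) :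
    a.val ≤ b.val + 2 ∧ b.val ≤ a.val + 2 := by
  have hne : (pathGraph n).edist a b ≠ ⊤ := by
    intro ht; rw [ht] at h; exact absurd h (by simp)
  obtain ⟨w, hw⟩ := SimpleGraph.exists_walk_of_edist_ne_top hne
  have hlen : (w.length : ℕ∞) ≤ 2 := hw.le.trans h
  have hlen' : w.length ≤ 2 := by exact_mod_cast hlen
  have := walk_val_bound w
  omega

lemma adj_of_succ {n : ℕ} {a b : Fin n} (h : a.val + 1 = b.val) :
    (pathGraph n).Adj a b := pathGraph_adj.mpr (Or.inl h)

lemma edist_le_one' {n : ℕ} {a b : Fin n} (h : (pathGraph n).Adj a b) :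
    (pathGraph n).edist a b ≤ 2 := by
  have := SimpleGraph.Walk.edist_le (SimpleGraph.Walk.cons h (SimpleGraph.Walk.nil))
  simp only [SimpleGraph.Walk.length_cons, SimpleGraph.Walk.length_nil] at this
  exact this.trans (by norm_num)

lemma edist_le_two' {n : ℕ} {a b c : Fin n} (h1 : (pathGraph n).Adj a b)
    (h2 : (pathGraph n).Adj b c) : (pathGraph n).edist a c ≤ 2 := by
  have := SimpleGraph.Walk.edist_le
    (SimpleGraph.Walk.cons h1 (SimpleGraph.Walk.cons h2 SimpleGraph.Walk.nil))
  simpa using this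

lemma val_diff_le_two_edist {n : ℕ} {a b : Fin n} (hab : a ≠ b)
    (h1 : a.val ≤ b.val + 2) (h2 : b.val ≤ a.val + 2) :
    (pathGraph n).edist a b ≤ 2 := by
  have hv : a.val ≠ b.val := fun h => hab (Fin.ext h)
  rcases Nat.lt_or_ge a.val b.val with h | h
  · rcases Nat.lt_or_ge (a.val + 1) b.val with h' | h'
    · have hm : a.val + 1 < n := by omega
      refine edist_le_two' (adj_of_succ (b := ⟨a.val + 1, hm⟩) rfl) (adj_of_succ ?_)
      show a.val + 1 + 1 = b.val
      omega
    · exact edist_le_one' (adj_of_succ (by omega))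
  · have h : b.val < a.val := by omega
    rcases Nat.lt_or_ge (b.val + 1) a.val with h' | h'
    · have hm : b.val + 1 < n := by omega
      refine edist_le_two' (b := ⟨b.val + 1, hm⟩)
        (pathGraph_adj.mpr (Or.inr ?_)) (pathGraph_adj.mpr (Or.inr ?_))
      · show b.val + 1 + 1 = a.val
        omega
      · show b.val + 1 = b.val + 1
        rfl
    · exact edist_le_one' (pathGraph_adj.mpr (Or.inr (by omega)))

/-- Membership condition for the explicit 5-part partition. -/
def d2cond (i : ℕ) (x : ℕ) : Prop :=
  (i = 0 ∧ (x = 1 ∨ x = 6 ∨ 7 ≤ x)) ∨ (i = 1 ∧ (x = 0 ∨ x = 5)) ∨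
  (i = 2 ∧ x = 2) ∨ (i = 3 ∧ x = 3) ∨ (i = 4 ∧ x = 4)

theorem stmt_10 (n : ℕ) (hn : 7 ≤ n) : Trd2 (pathGraph n) = 5 := by
  set S := {k : ℕ | ∃ P : Fin k → Set (Fin n), IsD2TransPartition (pathGraph n) P} with hS
  -- upper bound
  have hub : ∀ k ∈ S, k ≤ 5 := by
    rintro k ⟨P, hne, huniq, htrans⟩
    by_contra hk
    push_neg at hk
    have hkpos : 0 < k := by omega
    set jlast : Fin k := ⟨k - 1, by omega⟩ with hj
    obtain ⟨b, hb⟩ := hne jlast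
    have hrep : ∀ i : Fin k, ∃ a ∈ P i, (pathGraph n).edist a b ≤ 2 := by
      intro i
      rcases eq_or_ne i jlast with rfl | hne'
      · exact ⟨b, hb, by simp⟩
      · have hlt : i < jlast := by
          have h1 := i.isLt
          have h2 : i.val ≠ k - 1 := fun h => hne' (Fin.ext h)
          exact Fin.lt_def.mpr (show i.val < k - 1 by omega)
        exact htrans i jlast hlt b hb
    choose f hf hfd using hrep
    have hinj : Function.Injective f := by
      intro i i' h
      obtain ⟨c, _, hc⟩ := huniq (f i)
      have h1 := hc i (hf i)
      have h2 := hc i' (h ▸ hf i')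
      exact h1.trans h2.symm
    -- all f i lie in a 5-element window around b
    have hwin : ∀ i, (f i).val ≤ b.val + 2 ∧ b.val ≤ (f i).val + 2 :=
      fun i => edist_two_val (hfd i)
    have hcard : k ≤ ((Finset.univ : Finset (Fin n)).filter
        (fun x => x.val ≤ b.val + 2 ∧ b.val ≤ x.val + 2)).card := by
      have hmemf : ∀ i : Fin k, f i ∈ (Finset.univ : Finset (Fin n)).filter
          (fun x => x.val ≤ b.val + 2 ∧ b.val ≤ x.val + 2) := by
        intro i
        rw [Finset.mem_filter]
        exact ⟨Finset.mem_univ _, hwin i⟩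
      have := Finset.card_le_card_of_injOn (s := (Finset.univ : Finset (Fin k))) f (fun i _ => hmemf i) hinj.injOn
      rwa [Finset.card_univ, Fintype.card_fin] at this
    have hcard5 : ((Finset.univ : Finset (Fin n)).filter
        (fun x => x.val ≤ b.val + 2 ∧ b.val ≤ x.val + 2)).card ≤ 5 := by
      have h5 : (Finset.Icc (b.val - 2) (b.val + 2)).card ≤ 5 := by
        rw [Nat.card_Icc]; omega
      refine le_trans (Finset.card_le_card_of_injOn (fun x => x.val) ?_ ?_) h5
      · intro x hx
        simp only [Finset.mem_coe, Finset.mem_filter] at hx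
        simp only [Finset.mem_coe, Finset.mem_Icc]
        omega
      · intro x _ y _ h
        exact Fin.ext h
    omega
  -- lower bound: explicit partition
  have h5 : 5 ∈ S := by
    refine ⟨fun i => {v : Fin n | d2cond i.val v.val}, ?_, ?_, ?_⟩
    · intro i
      fin_cases i
      · exact ⟨⟨1, by omega⟩, by unfold d2cond; simp⟩
      · exact ⟨⟨0, by omega⟩, by unfold d2cond; simp⟩
      · exact ⟨⟨2, by omega⟩, by unfold d2cond; simp⟩
      · exact ⟨⟨3, by omega⟩, by unfold d2cond; simp⟩
      · exact ⟨⟨4, by omega⟩, by unfold d2cond; simp⟩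
    · intro v
      have hex : ∃ m : ℕ, m < 5 ∧ d2cond m v.val ∧ ∀ m' < 5, d2cond m' v.val → m' = m := by
        refine ⟨if v.val = 0 ∨ v.val = 5 then 1 else if v.val = 2 then 2
          else if v.val = 3 then 3 else if v.val = 4 then 4 else 0, ?_, ?_, ?_⟩
        · split_ifs <;> omega
        · unfold d2cond; split_ifs <;> omega
        · intro m' hm' hc
          unfold d2cond at hc
          split_ifs <;> omega
      obtain ⟨m, hm5, hmc, hmu⟩ := hex
      exact ⟨⟨m, hm5⟩, hmc, fun j hj => Fin.ext (hmu j.val j.isLt hj)⟩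
    · intro i j hij b hb
      have hij' : i.val < j.val := hij
      have hj5 : j.val < 5 := j.isLt
      simp only [Set.mem_setOf_eq] at hb
      obtain ⟨t, ht1, ht2, ht3, ht4, ht5⟩ :
          ∃ t, t < n ∧ d2cond i.val t ∧ t ≠ b.val ∧ t ≤ b.val + 2 ∧ b.val ≤ t + 2 := by
        refine ⟨if i.val = 0 then (if b.val ≤ 3 then 1 else 6)
          else if i.val = 1 then (if b.val ≤ 2 then 0 else 5)
          else if i.val = 2 then 2 else if i.val = 3 then 3 else 4, ?_⟩
        unfold d2cond at hb ⊢
        split_ifs <;> omega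
      exact ⟨⟨t, ht1⟩, ht2,
        val_diff_le_two_edist (fun h => ht3 (congrArg Fin.val h)) ht4 ht5⟩
  -- conclude
  have hbdd : BddAbove S := ⟨5, fun k hk => hub k hk⟩
  exact le_antisymm (csSup_le ⟨5, h5⟩ hub) (le_csSup hbdd h5)
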